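/- Let ν be a compactly supported Borel probability measure on ℝ such that ∫ y^{k−1} dν(y) = c_k for every k ≥ 1, and let A_t be the unique ℝ-linear operator on ℝ[X] with A_t(1) = 0 and A_t∘F − F∘A_t = H_t. Then for every polynomial p ∈ ℝ[X] and every x ∈ ℝ, A_t(p)(x) = ((1+ηx+σx²)/(1+σt))·∫ r_p(x,y) dν(y), where r_p is the two-variable polynomial determined by the identity p(y) − p(x) − (y−x)·p′(x) = (y−x)²·r_p(x,y). -/

import Mathlib

open Polynomial Finset MeasureTheory

/-- The operator of multiplication by `X` on `ℝ[X]`. -/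
noncomputable def F : Module.End ℝ (Polynomial ℝ) := LinearMap.mulLeft ℝ (X : Polynomial ℝ)


noncomputable def sgeom (x y : ℝ) (n : ℕ) : ℝ := ∑ j ∈ range n, x ^ (n - 1 - j) * y ^ j

noncomputable def gfun (x y : ℝ) (n : ℕ) : ℝ := ∑ i ∈ range n, x ^ (n - 1 - i) * sgeom x y i

noncomputable def Ix (c : ℕ → ℝ) (x : ℝ) (n : ℕ) : ℝ :=
  ∑ i ∈ range n, x ^ (n - 1 - i) * ∑ j ∈ range i, x ^ (i - 1 - j) * c (j + 1)

lemma sgeom_succ (x y : ℝ) (n : ℕ) : sgeom x y (n + 1) = x ^ n + y * sgeom x y n := by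
  unfold sgeom
  rw [Finset.sum_range_succ', Finset.mul_sum]
  simp only [Nat.add_sub_cancel, Nat.sub_zero, pow_zero, mul_one]
  rw [add_comm]
  congr 1
  refine Finset.sum_congr rfl fun j hj => ?_
  have h : n - (j + 1) = n - 1 - j := by omega
  rw [h, pow_succ]
  ring

lemma geom_eq (x y : ℝ) (n : ℕ) : y ^ n - x ^ n = (y - x) * sgeom x y n := by
  induction n with
  | zero => simp [sgeom]
  | succ n ih =>
    rw [sgeom_succ]
    have : y ^ (n + 1) - x ^ (n + 1) = y * (y ^ n - x ^ n) + (y - x) * x ^ n := by ring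
    rw [this, ih]; ring

lemma taylor_eq (x y : ℝ) (n : ℕ) :
    y ^ n - x ^ n - (y - x) * (n * x ^ (n - 1)) = (y - x) ^ 2 * gfun x y n := by
  have h1 : y ^ n - x ^ n = (y - x) * sgeom x y n := geom_eq x y n
  have h2 : sgeom x y n - n * x ^ (n - 1) = (y - x) * gfun x y n := by
    unfold sgeom gfun
    have hn : (n : ℝ) * x ^ (n - 1) = ∑ i ∈ range n, x ^ (n - 1) := by
      rw [Finset.sum_const, card_range, nsmul_eq_mul]
    rw [hn, ← Finset.sum_sub_distrib, Finset.mul_sum]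
    refine Finset.sum_congr rfl fun i hi => ?_
    have hx : x ^ (n - 1 - i) * x ^ i = x ^ (n - 1) := by
      rw [← pow_add]
      congr 1
      have := Finset.mem_range.mp hi
      omega
    have : x ^ (n - 1 - i) * y ^ i - x ^ (n - 1) = x ^ (n - 1 - i) * (y ^ i - x ^ i) := by
      rw [← hx]; ring
    rw [this, geom_eq x y i]; ring
  calc y ^ n - x ^ n - (y - x) * (n * x ^ (n - 1))
      = (y - x) * (sgeom x y n - n * x ^ (n - 1)) := by rw [h1]; ring
    _ = (y - x) ^ 2 * gfun x y n := by rw [h2]; ring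

lemma Ix_succ (c : ℕ → ℝ) (x : ℝ) (n : ℕ) :
    Ix c x (n + 1) = x * Ix c x n + ∑ j ∈ range n, x ^ (n - 1 - j) * c (j + 1) := by
  unfold Ix
  rw [Finset.sum_range_succ, Finset.mul_sum]
  simp only [Nat.add_sub_cancel, Nat.sub_self, pow_zero, one_mul]
  have h2 : ∀ i ∈ range n, x ^ (n - i) * (∑ j ∈ range i, x ^ (i-1-j) * c (j+1)) = x * (x ^ (n-1-i) * ∑ j ∈ range i, x ^ (i-1-j) * c (j+1)) := by
    intro i hi
    have h : n - i = (n - 1 - i) + 1 := by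
      have := Finset.mem_range.mp hi; omega
    rw [h, pow_succ]; ring
  rw [Finset.sum_congr rfl h2, ← Finset.mul_sum]

lemma gfun_continuous (x : ℝ) (n : ℕ) : Continuous fun y : ℝ => gfun x y n := by
  unfold gfun sgeom
  apply continuous_finset_sum
  intro i _
  apply Continuous.mul continuous_const
  apply continuous_finset_sum
  intro j _
  exact Continuous.mul continuous_const (continuous_pow j)

lemma integrable_of_compact_supp (ν : Measure ℝ) [IsProbabilityMeasure ν] (K : Set ℝ)
    (hK : IsCompact K) (h0 : ν Kᶜ = 0) (f : ℝ → ℝ) (hf : Continuous f) :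
    Integrable f ν := by
  have h1 : IntegrableOn f K ν := hf.continuousOn.integrableOn_compact hK
  have hae : ∀ᵐ y ∂ν, y ∈ K := by
    rw [MeasureTheory.ae_iff]
    simpa [Set.compl_def] using h0
  have h2 : K.indicator f =ᵐ[ν] f := by
    filter_upwards [hae] with y hy
    simp [Set.indicator_of_mem hy]
  exact ((integrable_indicator_iff hK.measurableSet).mpr h1).congr h2

lemma integral_gfun (ν : Measure ℝ) [IsProbabilityMeasure ν] (K : Set ℝ)
    (hK : IsCompact K) (h0 : ν Kᶜ = 0) (c : ℕ → ℝ)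
    (hmom : ∀ k : ℕ, 1 ≤ k → ∫ y : ℝ, y ^ (k - 1) ∂ν = c k) (x : ℝ) (n : ℕ) :
    ∫ y : ℝ, gfun x y n ∂ν = Ix c x n := by
  have hint : ∀ f : ℝ → ℝ, Continuous f → Integrable f ν :=
    fun f hf => integrable_of_compact_supp ν K hK h0 f hf
  unfold gfun Ix
  rw [integral_finset_sum]
  · refine Finset.sum_congr rfl fun i _ => ?_
    rw [integral_const_mul]
    congr 1
    unfold sgeom
    rw [integral_finset_sum]
    · refine Finset.sum_congr rfl fun j _ => ?_
      rw [integral_const_mul]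
      congr 1
      have := hmom (j + 1) (by omega)
      simpa using this
    · intro j _
      exact hint _ (continuous_const.mul (continuous_pow j))
  · intro i _
    apply hint
    apply Continuous.mul continuous_const
    unfold sgeom
    exact continuous_finset_sum _ fun j _ => continuous_const.mul (continuous_pow j)

lemma mv_cont (x : ℝ) (r : MvPolynomial (Fin 2) ℝ) :
    Continuous fun y : ℝ => MvPolynomial.eval ![x, y] r := by
  have h1 : Continuous fun y : ℝ => (![x, y] : Fin 2 → ℝ) := by
    apply continuous_pi
    intro i
    fin_cases i
    · simpa using continuous_const
    · simpa using continuous_id'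
  exact (MvPolynomial.continuous_eval (p := r)).comp h1

/-- Integral representation of the generator `A_t`: if `ν` is a compactly supported
probability measure with moments `∫ y^{k−1} dν = c_k`, and `A_t` is the unique operator
with `A_t 1 = 0` and `A_t∘F − F∘A_t = H_t`, then for every polynomial `p` and real `x`,
`A_t(p)(x) = ((1+ηx+σx²)/(1+σt))·∫ r_p(x,y) dν(y)`, where `r_p` is the polynomial with
`p(y) − p(x) − (y−x)·p′(x) = (y−x)²·r_p(x,y)`. -/
theorem stmt12 (t η θ σ τ : ℝ) (ht : 0 < t) (hσ : 0 ≤ σ) (hτ : 0 ≤ τ)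
    (hστ : σ * τ ≠ 1) (c : ℕ → ℝ) (hc1 : c 1 = 1)
    (hc : ∀ k : ℕ, 1 ≤ k →
      (1 + σ * t) * c (k + 1) =
        (θ - η * t) * c k +
          (t + τ) * ((∑ j ∈ Ico 1 k, c j * c (k - j)) +
            η * ∑ j ∈ range k, c (j + 1) * c (k - j) +
            σ * ∑ j ∈ range k, c (j + 2) * c (k - j)))
    (H : Module.End ℝ (Polynomial ℝ))
    (hH : ∀ n : ℕ, H (X ^ n) =
      C (1 / (1 + σ * t)) * (1 + C η * X + C σ * X ^ 2) *
        ∑ k ∈ Icc 1 n, C (c k) * X ^ (n - k))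
    (ν : Measure ℝ) (hprob : IsProbabilityMeasure ν)
    (hsupp : ∃ K : Set ℝ, IsCompact K ∧ ν Kᶜ = 0)
    (hmom : ∀ k : ℕ, 1 ≤ k → ∫ y : ℝ, y ^ (k - 1) ∂ν = c k)
    (A : Module.End ℝ (Polynomial ℝ))
    (hA1 : A 1 = 0) (hA : A * F - F * A = H) :
    ∀ (p : Polynomial ℝ) (r : MvPolynomial (Fin 2) ℝ),
      (∀ x y : ℝ, p.eval y - p.eval x - (y - x) * (derivative p).eval x =
        (y - x) ^ 2 * MvPolynomial.eval ![x, y] r) →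
      ∀ x : ℝ, (A p).eval x =
        ((1 + η * x + σ * x ^ 2) / (1 + σ * t)) *
          ∫ y : ℝ, MvPolynomial.eval ![x, y] r ∂ν := by
  intro p r hr x
  haveI := hprob
  obtain ⟨K, hK, hK0⟩ := hsupp
  have hint : ∀ f : ℝ → ℝ, Continuous f → Integrable f ν :=
    fun f hf => integrable_of_compact_supp ν K hK hK0 f hf
  set N := p.natDegree + 1 with hNdef
  set a : ℕ → ℝ := fun n => p.coeff n with hadef
  -- operator recursion
  have hAX : ∀ q : Polynomial ℝ, A (X * q) = X * A q + H q := by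
    intro q
    have h := congrArg (fun L : Module.End ℝ (Polynomial ℝ) => L q) hA
    simp only [LinearMap.sub_apply, Module.End.mul_apply, F, LinearMap.mulLeft_apply] at h
    rw [sub_eq_iff_eq_add] at h
    rw [h, add_comm]
  -- evaluation of A on monomials
  have hAn : ∀ n : ℕ, (A (X ^ n)).eval x =
      (1 / (1 + σ * t)) * (1 + η * x + σ * x ^ 2) * Ix c x n := by
    intro n
    induction n with
    | zero => simp [pow_zero, hA1, Ix]
    | succ n ih =>
      have h1 : (X : Polynomial ℝ) ^ (n + 1) = X * X ^ n := by ring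
      rw [h1, hAX (X ^ n), eval_add, eval_mul, eval_X, ih, hH n, Ix_succ]
      have h3 : ∑ k ∈ Icc 1 n, c k * x ^ (n - k)
          = ∑ j ∈ range n, x ^ (n - 1 - j) * c (j + 1) := by
        rw [← Finset.Ico_add_one_right_eq_Icc, Finset.sum_Ico_eq_sum_range]
        refine Finset.sum_congr (by norm_num) fun j hj => ?_
        have h4 : n - (1 + j) = n - 1 - j := by omega
        rw [h4, add_comm 1 j]
        ring
      simp only [eval_mul, eval_add, eval_one, eval_C, eval_X, eval_pow, eval_finset_sum]
      rw [h3]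
      ring
  -- p as a sum of monomials
  have hp_sum : p = ∑ n ∈ range N, C (a n) * X ^ n := by
    conv_lhs => rw [p.as_sum_range' N (by omega)]
    exact Finset.sum_congr rfl fun n _ => (C_mul_X_pow_eq_monomial).symm
  have hApe : (A p).eval x = ∑ n ∈ range N, a n * (A (X ^ n)).eval x := by
    conv_lhs => rw [hp_sum]
    rw [map_sum, eval_finset_sum]
    refine Finset.sum_congr rfl fun n _ => ?_
    rw [← smul_eq_C_mul, LinearMap.map_smul, eval_smul, smul_eq_mul]
  have hpy : ∀ y : ℝ, p.eval y = ∑ n ∈ range N, a n * y ^ n := fun y =>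
    p.eval_eq_sum_range y
  have hder : (derivative p).eval x = ∑ n ∈ range N, a n * (↑n * x ^ (n - 1)) := by
    conv_lhs => rw [hp_sum]
    rw [map_sum, eval_finset_sum]
    refine Finset.sum_congr rfl fun n _ => ?_
    rw [derivative_C_mul, derivative_X_pow]
    simp [mul_assoc]
  -- the integrand equals a polynomial expression
  have hG : ∀ y : ℝ, MvPolynomial.eval ![x, y] r = ∑ n ∈ range N, a n * gfun x y n := by
    have hcont1 := mv_cont x r
    have hcont2 : Continuous fun y : ℝ => ∑ n ∈ range N, a n * gfun x y n :=
      continuous_finset_sum _ fun n _ => continuous_const.mul (gfun_continuous x n)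
    have heqon : Set.EqOn (fun y : ℝ => MvPolynomial.eval ![x, y] r)
        (fun y : ℝ => ∑ n ∈ range N, a n * gfun x y n) {x}ᶜ := by
      intro y hy
      have hyx : y ≠ x := hy
      have key : (y - x) ^ 2 * MvPolynomial.eval ![x, y] r =
          (y - x) ^ 2 * ∑ n ∈ range N, a n * gfun x y n := by
        rw [← hr x y, hpy y, hpy x, hder]
        rw [Finset.mul_sum, Finset.mul_sum, ← Finset.sum_sub_distrib, ← Finset.sum_sub_distrib]
        refine Finset.sum_congr rfl fun n _ => ?_
        have htl := taylor_eq x y n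
        linear_combination a n * htl
      exact mul_left_cancel₀ (pow_ne_zero 2 (sub_ne_zero.mpr hyx)) key
    have hfun := hcont1.ext_on (dense_compl_singleton x) hcont2 heqon
    exact fun y => congrFun hfun y
  have hIntEq : ∫ y : ℝ, MvPolynomial.eval ![x, y] r ∂ν = ∑ n ∈ range N, a n * Ix c x n := by
    have hfe : (fun y : ℝ => MvPolynomial.eval ![x, y] r)
        = fun y : ℝ => ∑ n ∈ range N, a n * gfun x y n := funext hG
    rw [hfe, integral_finset_sum]
    · exact Finset.sum_congr rfl fun n _ => by
        rw [integral_const_mul, integral_gfun ν K hK hK0 c hmom x n]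
    · intro n _
      exact hint _ (continuous_const.mul (gfun_continuous x n))
  rw [hApe, hIntEq, Finset.mul_sum]
  refine Finset.sum_congr rfl fun n _ => ?_
  rw [hAn n]
  ring
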